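/- arXiv:2201.11954 — 2 statements merged into one kernel-verified Lean document; each statement's English description precedes it below -/
import Mathlib

section
/- Theorem (population Fréchet median of inhomogeneous Erdős–Rényi graphs): Let Pr be the inhomogeneous Erdős–Rényi measure on S with edge-probability matrix P. Then the adjacency matrix M defined by M_ij = 1 if p_ij > 1/2 and M_ij = 0 otherwise is a Fréchet median, i.e., for every B ∈ S, Σ_{A∈S} d_H(A,M) Pr(A) ≤ Σ_{A∈S} d_H(A,B) Pr(A). -/
open Finset
open scoped Classical

/-- The set of pairs (i,j) with i < j. -/
def pairs (n : ℕ) : Finset (Fin n × Fin n) :=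
  Finset.univ.filter (fun q => q.1 < q.2)

/-- The set `S` of adjacency matrices: symmetric Bool matrices with zero (false) diagonal. -/
noncomputable def adjS (n : ℕ) : Finset (Matrix (Fin n) (Fin n) Bool) :=
  Finset.univ.filter (fun A => (∀ i j, A i j = A j i) ∧ ∀ i, A i i = false)

/-- The real-valued 0/1 entry of an adjacency matrix. -/
noncomputable def val {n : ℕ} (A : Matrix (Fin n) (Fin n) Bool) (i j : Fin n) : ℝ :=
  if A i j then 1 else 0

/-- The Hamming distance between two graphs. -/
noncomputable def dH {n : ℕ} (A B : Matrix (Fin n) (Fin n) Bool) : ℝ :=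
  ∑ q ∈ pairs n, |val A q.1 q.2 - val B q.1 q.2|

/-- The inhomogeneous Erdős–Rényi probability of an adjacency matrix:
`∏_{i<j} p_ij^{a_ij} (1-p_ij)^{1-a_ij}`. -/
noncomputable def erPr {n : ℕ} (p : Fin n → Fin n → ℝ) (A : Matrix (Fin n) (Fin n) Bool) : ℝ :=
  ∏ q ∈ pairs n, if A q.1 q.2 then p q.1 q.2 else 1 - p q.1 q.2

/-- The edge set of a graph: pairs (i,j), i<j, with b_ij = 1. -/
def edges {n : ℕ} (B : Matrix (Fin n) (Fin n) Bool) : Finset (Fin n × Fin n) :=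
  (pairs n).filter (fun q => B q.1 q.2 = true)

/-- Flip the edge `q0` of `A` (symmetrically). -/
def eflip {n : ℕ} (q0 : Fin n × Fin n) (A : Matrix (Fin n) (Fin n) Bool) :
    Matrix (Fin n) (Fin n) Bool :=
  fun i j => if (i = q0.1 ∧ j = q0.2) ∨ (i = q0.2 ∧ j = q0.1) then !(A i j) else A i j

lemma mem_pairs {n : ℕ} {q : Fin n × Fin n} : q ∈ pairs n ↔ q.1 < q.2 := by
  simp [pairs]

lemma mem_adjS {n : ℕ} {A : Matrix (Fin n) (Fin n) Bool} :
    A ∈ adjS n ↔ (∀ i j, A i j = A j i) ∧ ∀ i, A i i = false := by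
  simp [adjS]

lemma eflip_mem {n : ℕ} {q0 : Fin n × Fin n} (hq : q0.1 ≠ q0.2)
    {A : Matrix (Fin n) (Fin n) Bool} (hA : A ∈ adjS n) : eflip q0 A ∈ adjS n := by
  rw [mem_adjS] at hA ⊢
  refine ⟨fun i j => ?_, fun i => ?_⟩
  · have h : ((j = q0.1 ∧ i = q0.2) ∨ (j = q0.2 ∧ i = q0.1)) ↔
        ((i = q0.1 ∧ j = q0.2) ∨ (i = q0.2 ∧ j = q0.1)) := by tauto
    simp only [eflip, h, hA.1 i j]
  · have h : ¬ ((i = q0.1 ∧ i = q0.2) ∨ (i = q0.2 ∧ i = q0.1)) := by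
      rintro (⟨h1, h2⟩ | ⟨h1, h2⟩) <;> exact hq (h1 ▸ h2 ▸ rfl)
    simp only [eflip, h, if_false, hA.2 i]

lemma eflip_eflip {n : ℕ} (q0 : Fin n × Fin n) (A : Matrix (Fin n) (Fin n) Bool) :
    eflip q0 (eflip q0 A) = A := by
  funext i j
  simp only [eflip]
  split_ifs <;> simp

lemma eflip_self {n : ℕ} (q0 : Fin n × Fin n) (A : Matrix (Fin n) (Fin n) Bool) :
    eflip q0 A q0.1 q0.2 = !(A q0.1 q0.2) := by
  simp [eflip]

lemma eflip_ne {n : ℕ} {q0 q : Fin n × Fin n} (hq0 : q0 ∈ pairs n) (hq : q ∈ pairs n)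
    (hne : q ≠ q0) (A : Matrix (Fin n) (Fin n) Bool) :
    eflip q0 A q.1 q.2 = A q.1 q.2 := by
  rw [mem_pairs] at hq0 hq
  have h : ¬ ((q.1 = q0.1 ∧ q.2 = q0.2) ∨ (q.1 = q0.2 ∧ q.2 = q0.1)) := by
    rintro (⟨h1, h2⟩ | ⟨h1, h2⟩)
    · exact hne (Prod.ext h1 h2)
    · rw [h1, h2] at hq; exact absurd hq (not_lt.2 hq0.le)
  simp only [eflip, h, if_false]

theorem stmt8 (n : ℕ) (p : Fin n → Fin n → ℝ)
    (hp : ∀ i j, 0 ≤ p i j ∧ p i j ≤ 1) (hsym : ∀ i j, p i j = p j i)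
    (hdiag : ∀ i, p i i = 0)
    (M : Matrix (Fin n) (Fin n) Bool)
    (hM : ∀ i j, M i j = true ↔ 1 / 2 < p i j) :
    ∀ B ∈ adjS n,
      ∑ A ∈ adjS n, dH A M * erPr p A ≤ ∑ A ∈ adjS n, dH A B * erPr p A := by
  intro B hB
  -- rewrite each side as a sum over pairs, with the edge-flip trick
  have key : ∀ C : Matrix (Fin n) (Fin n) Bool,
      ∑ A ∈ adjS n, dH A C * erPr p A
        = ∑ q ∈ pairs n, ∑ A ∈ (adjS n).filter (fun A => A q.1 q.2 = false),
            (|0 - val C q.1 q.2| * erPr p A + |1 - val C q.1 q.2| * erPr p (eflip q A)) := by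
    intro C
    have h1 : ∑ A ∈ adjS n, dH A C * erPr p A
        = ∑ q ∈ pairs n, ∑ A ∈ adjS n, |val A q.1 q.2 - val C q.1 q.2| * erPr p A := by
      rw [Finset.sum_comm]
      refine Finset.sum_congr rfl fun A _ => ?_
      rw [dH, Finset.sum_mul]
    rw [h1]
    refine Finset.sum_congr rfl fun q hq => ?_
    have hq12 : q.1 ≠ q.2 := ne_of_lt (mem_pairs.1 hq)
    rw [← Finset.sum_filter_add_sum_filter_not (adjS n) (fun A => A q.1 q.2 = false)]
    have h2 : ∑ A ∈ (adjS n).filter (fun A => ¬ A q.1 q.2 = false),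
          |val A q.1 q.2 - val C q.1 q.2| * erPr p A
        = ∑ A ∈ (adjS n).filter (fun A => A q.1 q.2 = false),
          |1 - val C q.1 q.2| * erPr p (eflip q A) := by
      refine Finset.sum_nbij' (eflip q) (eflip q) ?_ ?_ ?_ ?_ ?_
      · intro A hA
        rw [Finset.mem_filter] at hA ⊢
        refine ⟨eflip_mem hq12 hA.1, ?_⟩
        rw [eflip_self]
        simpa using hA.2
      · intro A hA
        rw [Finset.mem_filter] at hA ⊢
        refine ⟨eflip_mem hq12 hA.1, ?_⟩
        rw [eflip_self, hA.2]
        simp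
      · intro A _; exact eflip_eflip q A
      · intro A _; exact eflip_eflip q A
      · intro A hA
        rw [Finset.mem_filter] at hA
        have hAt : A q.1 q.2 = true := by simpa using hA.2
        rw [eflip_eflip]
        simp [_root_.val, hAt]
    rw [h2, ← Finset.sum_add_distrib]
    refine Finset.sum_congr rfl fun A hA => ?_
    rw [Finset.mem_filter] at hA
    simp [_root_.val, hA.2]
  rw [key M, key B]
  refine Finset.sum_le_sum fun q hq => Finset.sum_le_sum fun A hA => ?_
  rw [Finset.mem_filter] at hA
  have hq12 : q.1 < q.2 := mem_pairs.1 hq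
  -- factorization of erPr
  set R : ℝ := ∏ q' ∈ (pairs n).erase q, if A q'.1 q'.2 then p q'.1 q'.2 else 1 - p q'.1 q'.2
    with hR
  have hR0 : 0 ≤ R := by
    refine Finset.prod_nonneg fun q' _ => ?_
    split_ifs
    · exact (hp q'.1 q'.2).1
    · linarith [(hp q'.1 q'.2).2]
  have hA1 : erPr p A = (1 - p q.1 q.2) * R := by
    rw [erPr, ← Finset.mul_prod_erase _ _ hq, hA.2, if_neg (by simp)]
  have hA2 : erPr p (eflip q A) = p q.1 q.2 * R := by
    rw [erPr, ← Finset.mul_prod_erase _ _ hq, eflip_self, hA.2]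
    simp only [Bool.not_false, if_pos]
    congr 1
    refine Finset.prod_congr rfl fun q' hq' => ?_
    rw [Finset.mem_erase] at hq'
    rw [eflip_ne hq hq'.2 hq'.1]
  rw [hA1, hA2]
  -- case analysis on M and B entries
  rcases hbM : M q.1 q.2 <;> rcases hbB : B q.1 q.2 <;>
    simp only [_root_.val, hbM, hbB] <;> norm_num
  · -- M false, B true: p ≤ 1/2
    have hple : p q.1 q.2 ≤ 1 / 2 := by
      by_contra h
      exact absurd ((hM q.1 q.2).2 (lt_of_not_ge h)) (by simp [hbM])
    have h0 : (0:ℝ) ≤ p q.1 q.2 := (hp q.1 q.2).1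
    nlinarith
  · -- M true, B false: p > 1/2
    have hpgt : 1 / 2 < p q.1 q.2 := (hM q.1 q.2).1 hbM
    have h1 : p q.1 q.2 ≤ 1 := (hp q.1 q.2).2
    nlinarith
end

section
/- Sharp threshold corollary: if p_ij > 1/2 for all i < j, then the complete graph (all off-diagonal entries 1) minimizes B ↦ Σ_{A∈S} d_H(A,B)^2 Pr(A); if p_ij < 1/2 for all i < j, then the empty graph (the zero matrix) minimizes this functional. -/
set_option maxHeartbeats 1000000


open Finset
open scoped Classical

noncomputable def mkAdj {n : ℕ} (f : {q : Fin n × Fin n // q ∈ pairs n} → Bool) :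
    Matrix (Fin n) (Fin n) Bool :=
  Matrix.of fun i j =>
    if h : (i, j) ∈ pairs n then f ⟨(i, j), h⟩
    else if h' : (j, i) ∈ pairs n then f ⟨(j, i), h'⟩ else false

lemma mkAdj_mem {n : ℕ} (f : {q : Fin n × Fin n // q ∈ pairs n} → Bool) :
    mkAdj f ∈ adjS n := by
  simp only [adjS, mem_filter, mem_univ, true_and]
  constructor
  · intro i j
    rcases lt_trichotomy i j with h | h | h
    · have h1 : (i, j) ∈ pairs n := mem_pairs.2 h
      have h2 : ¬ (j, i) ∈ pairs n := by simp [mem_pairs]; exact le_of_lt h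
      simp [mkAdj, h1, h2]
    · subst h; rfl
    · have h1 : (j, i) ∈ pairs n := mem_pairs.2 h
      have h2 : ¬ (i, j) ∈ pairs n := by simp [mem_pairs]; exact le_of_lt h
      simp [mkAdj, h1, h2]
  · intro i
    have h2 : ¬ (i, i) ∈ pairs n := by simp [mem_pairs]
    simp [mkAdj, h2]

lemma sum_adjS_prod {n : ℕ} (g : Fin n × Fin n → Bool → ℝ) :
    ∑ A ∈ adjS n, ∏ q ∈ pairs n, g q (A q.1 q.2)
      = ∏ q ∈ pairs n, (g q true + g q false) := by
  have key : ∑ A ∈ adjS n, ∏ q ∈ pairs n, g q (A q.1 q.2)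
      = ∑ f : {q : Fin n × Fin n // q ∈ pairs n} → Bool,
          ∏ q : {q : Fin n × Fin n // q ∈ pairs n}, g q.1 (f q) := by
    refine Finset.sum_nbij' (fun A => fun q => A q.1.1 q.1.2) mkAdj ?_ ?_ ?_ ?_ ?_
    · intro A _; exact mem_univ _
    · intro f _; exact mkAdj_mem f
    · intro A hA
      simp only [adjS, mem_filter, mem_univ, true_and] at hA
      funext i j
      rcases lt_trichotomy i j with h | h | h
      · have h1 : (i, j) ∈ pairs n := mem_pairs.2 h
        simp [mkAdj, h1]
      · subst h
        have h2 : ¬ (i, i) ∈ pairs n := by simp [mem_pairs]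
        simp [mkAdj, h2, hA.2 i]
      · have h1 : (j, i) ∈ pairs n := mem_pairs.2 h
        have h2 : ¬ (i, j) ∈ pairs n := by simp [mem_pairs]; exact le_of_lt h
        simp [mkAdj, h1, h2, hA.1 i j]
    · intro f _
      funext q
      have h1 : (q.1.1, q.1.2) ∈ pairs n := q.2
      simp [mkAdj, h1]
    · intro A _
      rw [← Finset.prod_attach (pairs n) (fun q => g q (A q.1 q.2)), Finset.univ_eq_attach]
  rw [key]
  have : ∀ q : {q : Fin n × Fin n // q ∈ pairs n}, g q.1 true + g q.1 false = ∑ b : Bool, g q.1 b := by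
    intro q; simp [Fintype.sum_bool]
  calc ∑ f : {q : Fin n × Fin n // q ∈ pairs n} → Bool,
          ∏ q : {q : Fin n × Fin n // q ∈ pairs n}, g q.1 (f q)
      = ∏ q : {q : Fin n × Fin n // q ∈ pairs n}, ∑ b : Bool, g q.1 b := by
        rw [← Fintype.piFinset_univ]
        exact (Finset.prod_univ_sum _ _).symm
    _ = ∏ q ∈ (pairs n).attach, (g q.1 true + g q.1 false) := by
        apply Finset.prod_congr rfl; intro q _; simp [Fintype.sum_bool]
    _ = ∏ q ∈ pairs n, (g q true + g q false) :=
        Finset.prod_attach (pairs n) (fun q => g q true + g q false)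

noncomputable def wt {n : ℕ} (p : Fin n → Fin n → ℝ) (q : Fin n × Fin n) (b : Bool) : ℝ :=
  if b then p q.1 q.2 else 1 - p q.1 q.2

noncomputable def mu {n : ℕ} (p : Fin n → Fin n → ℝ) (B : Matrix (Fin n) (Fin n) Bool)
    (q : Fin n × Fin n) : ℝ :=
  if B q.1 q.2 then 1 - p q.1 q.2 else p q.1 q.2

noncomputable def chi {n : ℕ} (B : Matrix (Fin n) (Fin n) Bool) (q : Fin n × Fin n) (b : Bool) : ℝ :=
  if b = B q.1 q.2 then 0 else 1

lemma chi_mul_self {n : ℕ} (B : Matrix (Fin n) (Fin n) Bool) (q : Fin n × Fin n) (b : Bool) :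
    chi B q b * chi B q b = chi B q b := by
  unfold chi; split <;> norm_num

lemma erPr_eq {n : ℕ} (p : Fin n → Fin n → ℝ) (A : Matrix (Fin n) (Fin n) Bool) :
    erPr p A = ∏ q ∈ pairs n, wt p q (A q.1 q.2) := rfl

lemma exp_single {n : ℕ} (p : Fin n → Fin n → ℝ) (B : Matrix (Fin n) (Fin n) Bool)
    {q0 : Fin n × Fin n} (h0 : q0 ∈ pairs n) :
    ∑ A ∈ adjS n, chi B q0 (A q0.1 q0.2) * erPr p A = mu p B q0 := by
  calc ∑ A ∈ adjS n, chi B q0 (A q0.1 q0.2) * erPr p A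
      = ∑ A ∈ adjS n, ∏ q ∈ pairs n,
          ((if q = q0 then chi B q0 (A q.1 q.2) else 1) * wt p q (A q.1 q.2)) := by
        refine Finset.sum_congr rfl fun A _ => ?_
        rw [Finset.prod_mul_distrib,
          Finset.prod_ite_eq' (pairs n) q0 (fun q => chi B q0 (A q.1 q.2)), if_pos h0,
          erPr_eq]
    _ = ∏ q ∈ pairs n, ((if q = q0 then chi B q0 true else 1) * wt p q true
          + (if q = q0 then chi B q0 false else 1) * wt p q false) :=
        sum_adjS_prod (fun q b => (if q = q0 then chi B q0 b else 1) * wt p q b)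
    _ = mu p B q0 := by
        rw [Finset.prod_eq_single q0]
        · cases h : B q0.1 q0.2 <;> simp [chi, mu, wt, h]
        · intro q _ hne
          rw [if_neg hne, if_neg hne]; simp [wt]
        · intro h; exact absurd h0 h

lemma exp_pair {n : ℕ} (p : Fin n → Fin n → ℝ) (B : Matrix (Fin n) (Fin n) Bool)
    {q0 q1 : Fin n × Fin n} (h0 : q0 ∈ pairs n) (h1 : q1 ∈ pairs n) (hne : q0 ≠ q1) :
    ∑ A ∈ adjS n, chi B q0 (A q0.1 q0.2) * chi B q1 (A q1.1 q1.2) * erPr p A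
      = mu p B q0 * mu p B q1 := by
  calc ∑ A ∈ adjS n, chi B q0 (A q0.1 q0.2) * chi B q1 (A q1.1 q1.2) * erPr p A
      = ∑ A ∈ adjS n, ∏ q ∈ pairs n,
          ((if q = q0 then chi B q0 (A q.1 q.2) else 1)
            * ((if q = q1 then chi B q1 (A q.1 q.2) else 1) * wt p q (A q.1 q.2))) := by
        refine Finset.sum_congr rfl fun A _ => ?_
        rw [Finset.prod_mul_distrib, Finset.prod_mul_distrib,
          Finset.prod_ite_eq' (pairs n) q0 (fun q => chi B q0 (A q.1 q.2)), if_pos h0,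
          Finset.prod_ite_eq' (pairs n) q1 (fun q => chi B q1 (A q.1 q.2)), if_pos h1,
          erPr_eq, mul_assoc]
    _ = ∏ q ∈ pairs n, ((if q = q0 then chi B q0 true else 1)
            * ((if q = q1 then chi B q1 true else 1) * wt p q true)
          + (if q = q0 then chi B q0 false else 1)
            * ((if q = q1 then chi B q1 false else 1) * wt p q false)) :=
        sum_adjS_prod (fun q b => (if q = q0 then chi B q0 b else 1)
          * ((if q = q1 then chi B q1 b else 1) * wt p q b))
    _ = mu p B q0 * mu p B q1 := by
        rw [← Finset.mul_prod_erase (pairs n) _ h0,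
          ← Finset.mul_prod_erase ((pairs n).erase q0) _ (Finset.mem_erase.2 ⟨Ne.symm hne, h1⟩),
          Finset.prod_eq_one, mul_one]
        · have e0 : mu p B q0 = (if q0 = q0 then chi B q0 true else 1)
              * ((if q0 = q1 then chi B q1 true else 1) * wt p q0 true)
            + (if q0 = q0 then chi B q0 false else 1)
              * ((if q0 = q1 then chi B q1 false else 1) * wt p q0 false) := by
            rw [if_pos rfl, if_pos rfl, if_neg hne, if_neg hne]
            cases h : B q0.1 q0.2 <;> simp [chi, mu, wt, h]
          have e1 : mu p B q1 = (if q1 = q0 then chi B q0 true else 1)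
              * ((if q1 = q1 then chi B q1 true else 1) * wt p q1 true)
            + (if q1 = q0 then chi B q0 false else 1)
              * ((if q1 = q1 then chi B q1 false else 1) * wt p q1 false) := by
            rw [if_pos rfl, if_pos rfl, if_neg (Ne.symm hne), if_neg (Ne.symm hne)]
            cases h : B q1.1 q1.2 <;> simp [chi, mu, wt, h]
          rw [← e0, ← e1]
        · intro q hq
          have hq0 : q ≠ q0 := (Finset.mem_erase.1 (Finset.mem_of_mem_erase hq)).1
          have hq1 : q ≠ q1 := (Finset.mem_erase.1 hq).1
          rw [if_neg hq0, if_neg hq0, if_neg hq1, if_neg hq1]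
          simp [wt]

lemma exp_dH_sq {n : ℕ} (p : Fin n → Fin n → ℝ) (B : Matrix (Fin n) (Fin n) Bool) :
    ∑ A ∈ adjS n, (dH A B) ^ 2 * erPr p A
      = ∑ q0 ∈ pairs n, ∑ q1 ∈ pairs n,
          (if q0 = q1 then mu p B q0 else mu p B q0 * mu p B q1) := by
  have hd : ∀ A : Matrix (Fin n) (Fin n) Bool,
      dH A B = ∑ q ∈ pairs n, chi B q (A q.1 q.2) := by
    intro A
    refine Finset.sum_congr rfl fun q _ => ?_
    unfold _root_.val chi
    cases h1 : A q.1 q.2 <;> cases h2 : B q.1 q.2 <;> simp [h1, h2] <;> norm_num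
  calc ∑ A ∈ adjS n, (dH A B) ^ 2 * erPr p A
      = ∑ A ∈ adjS n, ∑ q0 ∈ pairs n, ∑ q1 ∈ pairs n,
          chi B q0 (A q0.1 q0.2) * chi B q1 (A q1.1 q1.2) * erPr p A := by
        refine Finset.sum_congr rfl fun A _ => ?_
        rw [hd, sq, Finset.sum_mul_sum, Finset.sum_mul]
        refine Finset.sum_congr rfl fun q0 _ => ?_
        rw [Finset.sum_mul]
    _ = ∑ q0 ∈ pairs n, ∑ q1 ∈ pairs n,
          (if q0 = q1 then mu p B q0 else mu p B q0 * mu p B q1) := by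
        rw [Finset.sum_comm]
        refine Finset.sum_congr rfl fun q0 h0 => ?_
        rw [Finset.sum_comm]
        refine Finset.sum_congr rfl fun q1 h1 => ?_
        by_cases hq : q0 = q1
        · subst hq
          rw [if_pos rfl, ← exp_single p B h0]
          refine Finset.sum_congr rfl fun A _ => ?_
          rw [chi_mul_self]
        · rw [if_neg hq]
          exact exp_pair p B h0 h1 hq

theorem stmt9 (n : ℕ) (p : Fin n → Fin n → ℝ)
    (hp : ∀ i j, 0 ≤ p i j ∧ p i j ≤ 1) (hsym : ∀ i j, p i j = p j i)
    (hdiag : ∀ i, p i i = 0) :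
    ((∀ i j : Fin n, i < j → 1 / 2 < p i j) →
      ∀ B ∈ adjS n,
        ∑ A ∈ adjS n, (dH A (Matrix.of fun i j => decide (i ≠ j))) ^ 2 * erPr p A ≤
          ∑ A ∈ adjS n, (dH A B) ^ 2 * erPr p A) ∧
    ((∀ i j : Fin n, i < j → p i j < 1 / 2) →
      ∀ B ∈ adjS n,
        ∑ A ∈ adjS n, (dH A (Matrix.of fun _ _ => false)) ^ 2 * erPr p A ≤
          ∑ A ∈ adjS n, (dH A B) ^ 2 * erPr p A) := by
  have key : ∀ C B : Matrix (Fin n) (Fin n) Bool,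
      (∀ q ∈ pairs n, 0 ≤ mu p C q ∧ mu p C q ≤ mu p B q ∧ mu p B q ≤ 1) →
      ∑ A ∈ adjS n, (dH A C) ^ 2 * erPr p A ≤ ∑ A ∈ adjS n, (dH A B) ^ 2 * erPr p A := by
    intro C B h
    rw [exp_dH_sq, exp_dH_sq]
    refine Finset.sum_le_sum fun q0 h0 => Finset.sum_le_sum fun q1 h1 => ?_
    obtain ⟨c0, l0, u0⟩ := h q0 h0
    obtain ⟨c1, l1, u1⟩ := h q1 h1
    by_cases hq : q0 = q1
    · rw [if_pos hq, if_pos hq]; subst hq; exact l0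
    · rw [if_neg hq, if_neg hq]
      exact mul_le_mul l0 l1 c1 (le_trans c0 l0)
  constructor
  · intro hth B _
    refine key _ B fun q hq => ?_
    have hlt := mem_pairs.1 hq
    obtain ⟨hp0, hp1⟩ := hp q.1 q.2
    have hhalf := hth q.1 q.2 hlt
    have hC : mu p (Matrix.of fun i j => decide (i ≠ j)) q = 1 - p q.1 q.2 := by
      simp [mu, Matrix.of_apply, ne_of_lt hlt]
    rw [hC]
    cases hB : B q.1 q.2 <;> simp only [mu, hB, if_true, if_false, Bool.false_eq_true,
      Bool.true_eq_false, ite_true, ite_false] <;>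
      exact ⟨by linarith, by linarith, by linarith⟩
  · intro hth B _
    refine key _ B fun q hq => ?_
    have hlt := mem_pairs.1 hq
    obtain ⟨hp0, hp1⟩ := hp q.1 q.2
    have hhalf := hth q.1 q.2 hlt
    have hC : mu p (Matrix.of fun _ _ => false) q = p q.1 q.2 := by
      simp [mu, Matrix.of_apply]
    rw [hC]
    cases hB : B q.1 q.2 <;> simp only [mu, hB, if_true, if_false, Bool.false_eq_true,
      Bool.true_eq_false, ite_true, ite_false] <;>
      exact ⟨by linarith, by linarith, by linarith⟩
end
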